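/- arXiv:2508.14858 — 2 statements merged into one kernel-verified Lean document; each statement's English description precedes it below -/
import Mathlib

section
/- Conversely, if a survey distribution S on a finite set Y satisfies dS(y) ∝ dP(y)·exp(−θ·η(y)) for a population distribution P, then there exist response probabilities α: Y → (0,1] with log α(y) − log α(y') = θ·(η(y') − η(y)) for all y, y' such that the conditional distribution of Y given response equals S. -/
open Real Finset

theorem stmt2 {Y : Type*} [Fintype Y] [Nonempty Y]
    (P S : Y → ℝ) (hP : ∀ y, 0 < P y) (hPsum : ∑ y, P y = 1)
    (η : Y → ℝ) (θ : ℝ)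
    (hS : ∀ y, S y = P y * Real.exp (-(θ * η y)) / ∑ y', P y' * Real.exp (-(θ * η y'))) :
    ∃ α : Y → ℝ, (∀ y, 0 < α y ∧ α y ≤ 1) ∧
      (∀ y y', Real.log (α y) - Real.log (α y') = θ * (η y' - η y)) ∧
      (∀ y, S y = P y * α y / ∑ y', P y' * α y') := by
  set m : ℝ := Finset.univ.sup' Finset.univ_nonempty (fun y => -(θ * η y)) with hm
  refine ⟨fun y => Real.exp (-(θ * η y) - m), ?_, ?_, ?_⟩
  · intro y
    refine ⟨Real.exp_pos _, ?_⟩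
    have : -(θ * η y) - m ≤ 0 := by
      have := Finset.le_sup' (fun y => -(θ * η y)) (Finset.mem_univ y)
      linarith
    simpa using Real.exp_le_one_iff.mpr this
  · intro y y'
    rw [Real.log_exp, Real.log_exp]
    ring
  · intro y
    rw [hS y]
    have h1 : ∀ z, P z * Real.exp (-(θ * η z) - m)
        = (P z * Real.exp (-(θ * η z))) * Real.exp (-m) := by
      intro z; rw [sub_eq_add_neg, Real.exp_add]; ring
    simp only [h1, ← Finset.sum_mul]
    rw [mul_div_mul_right _ _ (Real.exp_ne_zero _)]
end

section
/- Under the same setup, for any probability distribution Q on Y with E_Q[ψ(Y)] = c, the following Pythagorean identity holds: KL(Q || S) = KL(Q || Q_{θ*}) + KL(Q_{θ*} || S), where Q_{θ*} is the exponential tilting of S by ψ satisfying the moment constraint E_{Q_{θ*}}[ψ(Y)] = c. -/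
open Real Finset

theorem stmt10 {Y : Type*} [Fintype Y] [Nonempty Y]
    (S : Y → ℝ) (hS : ∀ y, 0 < S y) (hsum : ∑ y, S y = 1)
    (ψ : Y → ℝ) (c : ℝ)
    (A : ℝ → ℝ) (hA : ∀ t, A t = Real.log (∑ y, S y * Real.exp (t * ψ y)))
    (Qt : ℝ → Y → ℝ) (hQt : ∀ t y, Qt t y = S y * Real.exp (t * ψ y - A t))
    (θs : ℝ) (hmatch : ∑ y, Qt θs y * ψ y = c)
    (Q : Y → ℝ) (hQ0 : ∀ y, 0 ≤ Q y) (hQsum : ∑ y, Q y = 1)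
    (hQc : ∑ y, Q y * ψ y = c) :
    ∑ y, Q y * Real.log (Q y / S y)
      = (∑ y, Q y * Real.log (Q y / Qt θs y))
        + ∑ y, Qt θs y * Real.log (Qt θs y / S y) := by
  have hZ : 0 < ∑ y, S y * Real.exp (θs * ψ y) :=
    Finset.sum_pos (fun y _ => mul_pos (hS y) (Real.exp_pos _)) Finset.univ_nonempty
  have hexpA : Real.exp (A θs) = ∑ y, S y * Real.exp (θs * ψ y) := by
    rw [hA, Real.exp_log hZ]
  have hQtpos : ∀ y, 0 < Qt θs y := by
    intro y; rw [hQt]; exact mul_pos (hS y) (Real.exp_pos _)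
  have hQtsum : ∑ y, Qt θs y = 1 := by
    have : ∀ y, Qt θs y = S y * Real.exp (θs * ψ y) * Real.exp (-(A θs)) := by
      intro y; rw [hQt, sub_eq_add_neg, Real.exp_add, mul_assoc]
    rw [Finset.sum_congr rfl (fun y _ => this y), ← Finset.sum_mul, ← hexpA,
      ← Real.exp_add, add_neg_cancel, Real.exp_zero]
  have hlog : ∀ y, Real.log (Qt θs y / S y) = θs * ψ y - A θs := by
    intro y
    rw [hQt, mul_comm, mul_div_assoc, div_self (hS y).ne', mul_one, Real.log_exp]
  have hright : ∑ y, Qt θs y * Real.log (Qt θs y / S y) = θs * c - A θs := by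
    calc ∑ y, Qt θs y * Real.log (Qt θs y / S y)
        = ∑ y, (θs * (Qt θs y * ψ y) - A θs * Qt θs y) := by
          refine Finset.sum_congr rfl fun y _ => ?_
          rw [hlog]; ring
      _ = θs * c - A θs := by
          rw [Finset.sum_sub_distrib, ← Finset.mul_sum, ← Finset.mul_sum, hmatch,
            hQtsum, mul_one]
  have hleft : ∀ y, Q y * Real.log (Q y / S y)
      = Q y * Real.log (Q y / Qt θs y) + (θs * (Q y * ψ y) - A θs * Q y) := by
    intro y
    rcases eq_or_lt_of_le (hQ0 y) with h | h
    · simp [← h]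
    · have : Real.log (Q y / S y) = Real.log (Q y / Qt θs y) + Real.log (Qt θs y / S y) := by
        have h1 := (hQtpos y).ne'
        have h2 := (hS y).ne'
        rw [← Real.log_mul (div_pos h (hQtpos y)).ne' (div_pos (hQtpos y) (hS y)).ne']
        congr 1
        field_simp
      rw [this, hlog]; ring
  rw [Finset.sum_congr rfl (fun y _ => hleft y), Finset.sum_add_distrib,
    Finset.sum_sub_distrib, ← Finset.mul_sum, ← Finset.mul_sum, hQc, hQsum, mul_one, hright]
end
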